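/- For any integer n ≥ 6, let K = ⌈n^{1/3}⌉, M = ⌊K/2⌋, and let S ⊆ ℤ/nℤ be the set {±j, ±jK, ±jK² : 1 ≤ j ≤ M} (reduced mod n). Then |S| ≤ 6⌈n^{1/3}/2⌉ and every element of ℤ/nℤ can be expressed as a sum of at most 3 elements of S; in particular the Cayley graph Cay(ℤ/nℤ, S) has diameter at most 3. -/

import Mathlib

/-- `K = ⌈n^{1/3}⌉`. -/
noncomputable def cubeRootCeil (n : ℕ) : ℕ := ⌈(n : ℝ) ^ ((1 : ℝ) / 3)⌉₊

/-- `M = ⌊K/2⌋`. -/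
noncomputable def halfCubeRootCeil (n : ℕ) : ℕ := cubeRootCeil n / 2

/-- The set `S = {±j, ±jK, ±jK² : 1 ≤ j ≤ M} ⊆ ℤ/nℤ`. -/
noncomputable def cyclicGenSet (n : ℕ) : Set (ZMod n) :=
  {z | ∃ j : ℕ, 1 ≤ j ∧ j ≤ halfCubeRootCeil n ∧
    (z = (j : ZMod n) ∨ z = -(j : ZMod n) ∨
      z = (j : ZMod n) * (cubeRootCeil n : ZMod n) ∨
      z = -((j : ZMod n) * (cubeRootCeil n : ZMod n)) ∨
      z = (j : ZMod n) * (cubeRootCeil n : ZMod n) ^ 2 ∨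
      z = -((j : ZMod n) * (cubeRootCeil n : ZMod n) ^ 2))}

lemma digit_step (M Q B r : ℤ) (hM : 0 ≤ M) (hB : 0 ≤ B) (hQ : 0 < Q) (hcov : Q ≤ 2*B+1)
    (hr : |r| ≤ M*Q + B) : ∃ c, |c| ≤ M ∧ |r - c*Q| ≤ B := by
  rw [abs_le] at hr
  set c₀ := (r + B) / Q with hc0
  have h1 : c₀ * Q ≤ r + B := Int.ediv_mul_le _ (ne_of_gt hQ)
  have h2 : r + B < (c₀ + 1) * Q := Int.lt_ediv_add_one_mul_self _ hQ
  have h3 : -M ≤ c₀ := by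
    rw [hc0, Int.le_ediv_iff_mul_le hQ]
    nlinarith [hr.1]
  by_cases hle : c₀ ≤ M
  · refine ⟨c₀, by rw [abs_le]; exact ⟨h3, hle⟩, ?_⟩
    rw [abs_le]
    constructor <;> nlinarith
  · refine ⟨M, by rw [abs_le]; omega, ?_⟩
    push_neg at hle
    have h4 : (M + 1) * Q ≤ c₀ * Q := by
      apply mul_le_mul_of_nonneg_right _ (le_of_lt hQ)
      omega
    rw [abs_le]
    constructor <;> nlinarith

lemma balanced3 (M K r : ℤ) (hM : 0 < M) (hK2 : 2 ≤ K) (hK : K ≤ 2*M+1)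
    (hr : |r| ≤ M*(K^2+K+1)) :
    ∃ a b c, |a| ≤ M ∧ |b| ≤ M ∧ |c| ≤ M ∧ r = a + b*K + c*K^2 := by
  obtain ⟨c, hc, hc2⟩ := digit_step M (K^2) (M*(K+1)) r (by linarith) (by nlinarith)
    (by positivity) (by nlinarith) (by nlinarith [hr, abs_nonneg r])
  obtain ⟨b, hb, hb2⟩ := digit_step M K M (r - c*K^2) (by linarith) (by linarith)
    (by linarith) (by linarith) (by nlinarith [hc2])
  exact ⟨r - c*K^2 - b*K, b, c, hb2, hb, hc, by ring⟩

lemma K_facts (n : ℕ) (hn : 6 ≤ n) :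
    2 ≤ cubeRootCeil n ∧ n ≤ (cubeRootCeil n)^3 := by
  have hn1 : (1 : ℝ) < (n : ℝ) := by exact_mod_cast lt_of_lt_of_le (by norm_num) hn
  have hx1 : (1:ℝ) < (n : ℝ) ^ ((1 : ℝ) / 3) :=
    Real.one_lt_rpow_iff_of_pos (by linarith) |>.mpr (Or.inl ⟨hn1, by norm_num⟩)
  have hx3 : ((n : ℝ) ^ ((1 : ℝ) / 3)) ^ (3:ℕ) = (n : ℝ) := by
    rw [← Real.rpow_natCast (((n:ℝ)) ^ ((1:ℝ)/3)) 3, ← Real.rpow_mul (by positivity)]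
    norm_num
  constructor
  · exact Nat.lt_ceil (n := 1).mpr (by exact_mod_cast hx1)
  · have hxK : (n : ℝ) ^ ((1 : ℝ) / 3) ≤ (cubeRootCeil n : ℝ) := Nat.le_ceil _
    have : (n : ℝ) ≤ ((cubeRootCeil n : ℕ) : ℝ)^(3:ℕ) := by
      rw [← hx3]
      exact pow_le_pow_left₀ (by positivity) hxK 3
    exact_mod_cast this

lemma M_le (n : ℕ) (hn : 6 ≤ n) :
    halfCubeRootCeil n ≤ ⌈(n : ℝ) ^ ((1 : ℝ) / 3) / 2⌉₊ := by
  set x : ℝ := (n : ℝ) ^ ((1 : ℝ) / 3) with hx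
  have h1 : ((cubeRootCeil n : ℕ) : ℝ) < x + 1 := by
    have h := Nat.ceil_lt_add_one (R := ℝ) (a := x) (by positivity)
    rw [cubeRootCeil, ← hx]
    exact h
  have h2 : x / 2 ≤ (⌈x / 2⌉₊ : ℝ) := Nat.le_ceil _
  have h3 : ((cubeRootCeil n : ℕ) : ℝ) < 2 * (⌈x/2⌉₊ : ℝ) + 1 := by linarith
  have h4 : cubeRootCeil n < 2 * ⌈x/2⌉₊ + 1 := by exact_mod_cast h3
  unfold halfCubeRootCeil
  omega

lemma mem_gen (n : ℕ) (a : ℤ) (ha : a ≠ 0) (haM : |a| ≤ (halfCubeRootCeil n : ℤ))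
    (e : ℕ) (he : e ≤ 2) :
    (a : ZMod n) * (cubeRootCeil n : ZMod n) ^ e ∈ cyclicGenSet n := by
  rw [abs_le] at haM
  refine ⟨a.natAbs, by omega, by omega, ?_⟩
  have h2 : (a : ZMod n) = (a.natAbs : ZMod n) ∨ (a : ZMod n) = -(a.natAbs : ZMod n) := by
    rcases Int.natAbs_eq a with h | h
    · left
      conv_lhs => rw [h]
      exact Int.cast_natCast _
    · right
      conv_lhs => rw [h]
      rw [Int.cast_neg, Int.cast_natCast]
  interval_cases e <;> rcases h2 with h2 | h2 <;> rw [h2] <;>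
    simp [pow_zero, pow_one, mul_one, neg_mul]

noncomputable def optD (n : ℕ) (a : ℤ) (w : ZMod n) : List (ZMod n) :=
  if a = 0 then [] else [(a : ZMod n) * w]

lemma optD_length (n : ℕ) (a : ℤ) (w : ZMod n) : (optD n a w).length ≤ 1 := by
  unfold optD; split <;> simp

lemma optD_sum (n : ℕ) (a : ℤ) (w : ZMod n) : (optD n a w).sum = (a : ZMod n) * w := by
  unfold optD; split <;> simp [*]

lemma optD_mem (n : ℕ) (a : ℤ) (w : ZMod n) (x : ZMod n) (hx : x ∈ optD n a w) :
    a ≠ 0 ∧ x = (a : ZMod n) * w := by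
  unfold optD at hx; split at hx <;> simp_all

lemma card6 {α : Type*} [DecidableEq α] (a b c d e f : α) :
    ({a, b, c, d, e, f} : Finset α).card ≤ 6 := by
  apply le_trans (Finset.card_insert_le _ _)
  apply Nat.succ_le_succ
  apply le_trans (Finset.card_insert_le _ _)
  apply Nat.succ_le_succ
  apply le_trans (Finset.card_insert_le _ _)
  apply Nat.succ_le_succ
  apply le_trans (Finset.card_insert_le _ _)
  apply Nat.succ_le_succ
  apply le_trans (Finset.card_insert_le _ _)
  apply Nat.succ_le_succ
  simp

/-- For any `n ≥ 6`, the set `S = {±j, ±jK, ±jK² : 1 ≤ j ≤ ⌊K/2⌋} ⊆ ℤ/nℤ`,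
where `K = ⌈n^{1/3}⌉`, has cardinality at most `6⌈n^{1/3}/2⌉` and every element
of `ℤ/nℤ` is a sum of at most `3` elements of `S`; hence `Cay(ℤ/nℤ, S)` has
diameter at most `3`. -/
theorem cyclic_diameter_three (n : ℕ) (hn : 6 ≤ n) :
    (cyclicGenSet n).ncard ≤ 6 * ⌈(n : ℝ) ^ ((1 : ℝ) / 3) / 2⌉₊ ∧
    ∀ z : ZMod n, ∃ l : List (ZMod n),
      l.length ≤ 3 ∧ (∀ x ∈ l, x ∈ cyclicGenSet n) ∧ l.sum = z := by
  obtain ⟨hK2, hKn⟩ := K_facts n hn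
  have hMdef : halfCubeRootCeil n = cubeRootCeil n / 2 := rfl
  set K := cubeRootCeil n with hKdef
  set M := halfCubeRootCeil n with hMd
  have hMK : K ≤ 2*M+1 := by omega
  have hMK2 : 2*M ≤ K := by omega
  have hM1 : 1 ≤ M := by omega
  haveI : NeZero n := ⟨by omega⟩
  constructor
  · -- cardinality bound
    classical
    set F : Finset (ZMod n) := (Finset.Icc 1 M).biUnion (fun j =>
      ({(j : ZMod n), -(j : ZMod n), (j : ZMod n)*(K : ZMod n), -((j : ZMod n)*(K : ZMod n)),
       (j : ZMod n)*(K : ZMod n)^2, -((j : ZMod n)*(K : ZMod n)^2)} : Finset (ZMod n))) with hF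
    have hsub : cyclicGenSet n ⊆ ↑F := by
      rintro z ⟨j, hj1, hj2, hz⟩
      simp only [hF, Finset.coe_biUnion, Set.mem_iUnion, Finset.mem_coe, Finset.mem_Icc,
        Finset.mem_insert, Finset.mem_singleton]
      exact ⟨j, ⟨hj1, hj2⟩, by tauto⟩
    calc (cyclicGenSet n).ncard ≤ F.card := by
          simpa using Set.ncard_le_ncard hsub F.finite_toSet
      _ ≤ (Finset.Icc 1 M).card * 6 := Finset.card_biUnion_le_card_mul _ _ _
          (fun j _ => card6 _ _ _ _ _ _)
      _ = M * 6 := by simp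
      _ ≤ 6 * ⌈(n : ℝ) ^ ((1 : ℝ) / 3) / 2⌉₊ := by
          have := M_le n hn
          omega
  · -- diameter bound
    intro z
    have hvn : z.val < n := ZMod.val_lt z
    set r : ℤ := if z.val ≤ n / 2 then (z.val : ℤ) else (z.val : ℤ) - n with hr
    have hrz : (r : ZMod n) = z := by
      have hbase : ((z.val : ℕ) : ZMod n) = z := by
        simp [ZMod.natCast_val, ZMod.cast_id]
      rw [hr]; split_ifs
      · exact_mod_cast hbase
      · push_cast
        simp [ZMod.natCast_self, hbase]
    have hcube : K^3 ≤ 2*(M*(K^2+K+1))+1 := by nlinarith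
    have ht : n / 2 ≤ M*(K^2+K+1) := by omega
    have habs : |r| ≤ ((M*(K^2+K+1) : ℕ) : ℤ) := by
      rw [hr, abs_le]
      split_ifs with h <;> constructor <;> omega
    obtain ⟨a, b, c, ha, hb, hc, hrep⟩ := balanced3 (M:ℤ) (K:ℤ) r (by exact_mod_cast hM1)
      (by exact_mod_cast hK2) (by exact_mod_cast hMK) (by push_cast at habs ⊢; linarith)
    refine ⟨optD n a 1 ++ optD n b (K : ZMod n) ++ optD n c ((K : ZMod n)^2), ?_, ?_, ?_⟩
    · have := optD_length n a 1
      have := optD_length n b (K : ZMod n)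
      have := optD_length n c ((K : ZMod n)^2)
      simp only [List.length_append]
      omega
    · intro x hx
      simp only [List.mem_append] at hx
      rcases hx with (hx | hx) | hx
      · obtain ⟨h0, hxe⟩ := optD_mem n a 1 x hx
        rw [hxe]
        have := mem_gen n a h0 ha 0 (by norm_num)
        simpa using this
      · obtain ⟨h0, hxe⟩ := optD_mem n b (K : ZMod n) x hx
        rw [hxe]
        have := mem_gen n b h0 hb 1 (by norm_num)
        simpa using this
      · obtain ⟨h0, hxe⟩ := optD_mem n c ((K : ZMod n)^2) x hx
        rw [hxe]
        exact mem_gen n c h0 hc 2 (by norm_num)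
    · rw [hrep] at hrz
      push_cast at hrz
      simp only [List.sum_append, optD_sum]
      rw [← hrz]
      push_cast
      ring
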